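/- Let d be a positive odd integer and k̃ = ⌊(d+2)/4⌋. For R > 0, the Gram matrix Ã(R) of the functions r^{2i - d} (i = 1,...,k̃) with respect to the Ḣ^1 inner product ⟨f,g⟩ = ∫_R^∞ f'(r) g'(r) r^{d-1} dr has entries Ã(R)_{ij} = (2i - d)(2j - d) R^{2i + 2j - d - 2}/(d + 2 - 2i - 2j), and Ã(R) is positive definite. -/

import Mathlib

open MeasureTheory

private lemma integral_aux (R : ℝ) (hR : 0 < R) (d : ℕ) (a b : ℝ)
    (hc : a + b + (d : ℝ) - 3 < -1) :
    ∫ r in Set.Ioi R,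
        deriv (fun r : ℝ => r ^ a) r * deriv (fun r : ℝ => r ^ b) r * r ^ ((d : ℝ) - 1)
      = a * b * R ^ (a + b + (d : ℝ) - 2) / (-(a + b + (d : ℝ) - 2)) := by
  have h1 : Set.EqOn
      (fun r : ℝ => deriv (fun r : ℝ => r ^ a) r * deriv (fun r : ℝ => r ^ b) r *
        r ^ ((d : ℝ) - 1))
      (fun r : ℝ => a * b * r ^ (a + b + (d : ℝ) - 3)) (Set.Ioi R) := by
    intro r hr
    have hr0 : (0:ℝ) < r := lt_trans hR hr
    simp only []
    rw [Real.deriv_rpow_const, Real.deriv_rpow_const,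
      show a + b + (d : ℝ) - 3 = (a-1) + ((b-1) + ((d:ℝ)-1)) by ring,
      Real.rpow_add hr0, Real.rpow_add hr0]
    ring
  rw [setIntegral_congr_fun measurableSet_Ioi h1]
  simp_rw [mul_assoc a b]
  rw [integral_const_mul, integral_const_mul, integral_Ioi_rpow_of_lt hc hR,
    show a + b + (d:ℝ) - 3 + 1 = a + b + (d:ℝ) - 2 by ring]
  rw [div_neg]
  ring

/-- For `d` a positive odd integer, `k̃ = ⌊(d+2)/4⌋`, and `R > 0`: the Gram matrix of the
functions `r ^ (2i - d)` (for `1 ≤ i ≤ k̃`) with respect to the `Ḣ¹` inner product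
`⟨f,g⟩ = ∫_R^∞ f' g' r^(d-1) dr` has entries
`(2i-d)(2j-d) R^(2i+2j-d-2)/(d+2-2i-2j)`, and this matrix is positive definite. -/
theorem gram_matrix_H1 (d : ℕ) (hd : Odd d) (hd0 : 0 < d) (R : ℝ) (hR : 0 < R) :
    (∀ i j : Fin ((d + 2) / 4),
      ∫ r in Set.Ioi R,
          deriv (fun r : ℝ => r ^ ((2 * ((i : ℕ) + 1) : ℝ) - d)) r *
            deriv (fun r : ℝ => r ^ ((2 * ((j : ℕ) + 1) : ℝ) - d)) r *
              r ^ ((d : ℝ) - 1) =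
        ((2 * ((i : ℕ) + 1) : ℝ) - d) * ((2 * ((j : ℕ) + 1) : ℝ) - d) *
          R ^ ((2 * ((i : ℕ) + 1) + 2 * ((j : ℕ) + 1) : ℝ) - d - 2) /
            ((d : ℝ) + 2 - 2 * ((i : ℕ) + 1) - 2 * ((j : ℕ) + 1))) ∧
    Matrix.PosDef
      (Matrix.of fun i j : Fin ((d + 2) / 4) =>
        ((2 * ((i : ℕ) + 1) : ℝ) - d) * ((2 * ((j : ℕ) + 1) : ℝ) - d) *
          R ^ ((2 * ((i : ℕ) + 1) + 2 * ((j : ℕ) + 1) : ℝ) - d - 2) /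
            ((d : ℝ) + 2 - 2 * ((i : ℕ) + 1) - 2 * ((j : ℕ) + 1))) := by
  have ht : d % 2 = 1 := Nat.odd_iff.mp hd
  have hk4 : 4 * ((d + 2) / 4) ≤ d + 1 := by omega
  have hij1 : ∀ i j : Fin ((d + 2) / 4),
      2 * ((i : ℕ) + 1) + 2 * ((j : ℕ) + 1) ≤ d + 1 := by
    intro i j; have := i.isLt; have := j.isLt; omega
  constructor
  · intro i j
    have hc : ((2 * ((i : ℕ) + 1) : ℝ) - d) + ((2 * ((j : ℕ) + 1) : ℝ) - d) + (d : ℝ) - 3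
        < -1 := by
      have h := hij1 i j
      have : ((2 * ((i:ℕ)+1) + 2 * ((j:ℕ)+1) : ℕ) : ℝ) ≤ ((d + 1 : ℕ) : ℝ) :=
        Nat.cast_le.mpr h
      push_cast at this; linarith
    rw [integral_aux R hR d _ _ hc,
      show ((2 * ((i : ℕ) + 1) : ℝ) - d) + ((2 * ((j : ℕ) + 1) : ℝ) - d) + (d : ℝ) - 2
          = (2 * ((i : ℕ) + 1) + 2 * ((j : ℕ) + 1) : ℝ) - d - 2 by ring,
      show -((2 * ((i : ℕ) + 1) + 2 * ((j : ℕ) + 1) : ℝ) - (d:ℝ) - 2)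
          = (d : ℝ) + 2 - 2 * ((i : ℕ) + 1) - 2 * ((j : ℕ) + 1) by ring]
  · -- Part 2: positive definiteness
    set k := (d + 2) / 4 with hk
    set M := (d + 1) / 2 with hMdef
    have h2M : 2 * M = d + 1 := by omega
    have hMcast : (M : ℝ) = ((d : ℝ) + 1) / 2 := by
      have := congrArg (Nat.cast : ℕ → ℝ) h2M
      push_cast at this; linarith
    have h2iM : ∀ i : Fin k, 2 * ((i : ℕ) + 1) ≤ M := by
      intro i; have := i.isLt; omega
    set e : Fin k → ℕ := fun i => M - 2 * ((i : ℕ) + 1) with he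
    have hecast : ∀ i : Fin k, ((e i : ℝ)) = (M : ℝ) - 2 * ((i : ℕ) + 1) := by
      intro i
      rw [he]
      have := h2iM i
      push_cast [Nat.cast_sub this]
      ring
    set u : Fin k → ℝ :=
      fun i => ((2 * ((i : ℕ) + 1) : ℝ) - d) * R ^ ((2 * ((i : ℕ) + 1) : ℝ) - (d : ℝ)/2 - 1)
      with hu
    have hu0 : ∀ i, u i ≠ 0 := by
      intro i
      refine mul_ne_zero ?_ (Real.rpow_pos_of_pos hR _).ne'
      have hne : (2 * ((i : ℕ) + 1) : ℕ) ≠ d := by omega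
      intro h
      apply hne
      have : ((2 * ((i : ℕ) + 1) : ℕ) : ℝ) = (d : ℝ) := by push_cast; linarith
      exact_mod_cast this
    have hA : ∀ i j : Fin k,
        ((2 * ((i : ℕ) + 1) : ℝ) - d) * ((2 * ((j : ℕ) + 1) : ℝ) - d) *
          R ^ ((2 * ((i : ℕ) + 1) + 2 * ((j : ℕ) + 1) : ℝ) - d - 2) /
            ((d : ℝ) + 2 - 2 * ((i : ℕ) + 1) - 2 * ((j : ℕ) + 1))
        = u i * u j * (1 / ((e i : ℝ) + (e j : ℝ) + 1)) := by
      intro i j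
      have hden : ((e i : ℝ) + (e j : ℝ) + 1)
          = (d : ℝ) + 2 - 2 * ((i : ℕ) + 1) - 2 * ((j : ℕ) + 1) := by
        rw [hecast i, hecast j, hMcast]; ring
      rw [hu, hden,
        show ((2 * ((i : ℕ) + 1) + 2 * ((j : ℕ) + 1) : ℝ) - d - 2)
            = ((2 * ((i : ℕ) + 1) : ℝ) - (d:ℝ)/2 - 1) + ((2 * ((j : ℕ) + 1) : ℝ) - (d:ℝ)/2 - 1)
          by push_cast; ring,
        Real.rpow_add hR]
      ring
    refine Matrix.posDef_iff_dotProduct_mulVec.mpr ⟨?_, ?_⟩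
    · ext i j
      simp only [Matrix.conjTranspose_apply, Matrix.of_apply, star_trivial]
      rw [hA j i, hA i j]
      ring
    · intro v hv
      set c : Fin k → ℝ := fun i => v i * u i with hc
      set P : Polynomial ℝ := ∑ i : Fin k, Polynomial.C (c i) * Polynomial.X ^ (e i) with hP
      have hform : dotProduct (star v)
          ((Matrix.of fun i j : Fin k =>
            ((2 * ((i : ℕ) + 1) : ℝ) - d) * ((2 * ((j : ℕ) + 1) : ℝ) - d) *
              R ^ ((2 * ((i : ℕ) + 1) + 2 * ((j : ℕ) + 1) : ℝ) - d - 2) /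
                ((d : ℝ) + 2 - 2 * ((i : ℕ) + 1) - 2 * ((j : ℕ) + 1))).mulVec v)
          = ∑ i : Fin k, ∑ j : Fin k, c i * c j * (1 / ((e i : ℝ) + (e j : ℝ) + 1)) := by
        simp only [dotProduct, Matrix.mulVec, Matrix.of_apply, star_trivial, Finset.mul_sum]
        refine Finset.sum_congr rfl fun i _ => Finset.sum_congr rfl fun j _ => ?_
        rw [hA i j, hc]
        ring
      have hev : ∀ t : ℝ, (P.eval t) ^ 2
          = ∑ i : Fin k, ∑ j : Fin k, c i * c j * t ^ (e i + e j) := by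
        intro t
        rw [hP, sq, Polynomial.eval_finset_sum, Finset.sum_mul_sum]
        refine Finset.sum_congr rfl fun i _ => Finset.sum_congr rfl fun j _ => ?_
        simp [pow_add]
        ring
      have hint : ∀ (a : ℝ) (n : ℕ),
          IntegrableOn (fun t : ℝ => a * t ^ n) (Set.Ioo (0:ℝ) 1) := by
        intro a n
        exact ((continuous_const.mul (continuous_pow n)).integrableOn_Icc).mono_set
          Set.Ioo_subset_Icc_self
      have hmono : ∀ n : ℕ, (∫ t in Set.Ioo (0:ℝ) 1, t ^ n) = 1 / ((n : ℝ) + 1) := by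
        intro n
        rw [← integral_Ioc_eq_integral_Ioo, ← intervalIntegral.integral_of_le zero_le_one,
          integral_pow]
        simp
      have key : (∑ i : Fin k, ∑ j : Fin k, c i * c j * (1 / ((e i : ℝ) + (e j : ℝ) + 1)))
          = ∫ t in Set.Ioo (0:ℝ) 1, (P.eval t) ^ 2 := by
        simp_rw [hev]
        rw [integral_finset_sum _ fun i _ =>
          (integrable_finset_sum _ fun j _ => hint _ _)]
        refine Finset.sum_congr rfl fun i _ => ?_
        rw [integral_finset_sum _ fun j _ => hint _ _]
        refine Finset.sum_congr rfl fun j _ => ?_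
        rw [MeasureTheory.integral_const_mul, hmono]
        push_cast
        ring
      rw [hform, key]
      -- positivity of the integral
      have hinj : Function.Injective e := by
        intro i j hij
        have hi := h2iM i; have hj := h2iM j
        have : M - 2 * ((i : ℕ) + 1) = M - 2 * ((j : ℕ) + 1) := hij
        exact Fin.ext (by omega)
      have hP0 : P ≠ 0 := by
        obtain ⟨i0, hi0⟩ := Function.ne_iff.mp hv
        have hci0 : c i0 ≠ 0 := mul_ne_zero hi0 (hu0 i0)
        intro h
        apply hci0
        have hco : P.coeff (e i0) = c i0 := by
          rw [hP, Polynomial.finset_sum_coeff, Finset.sum_eq_single i0]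
          · simp
          · intro b _ hb
            have : e i0 ≠ e b := fun hh => hb (hinj hh.symm)
            simp [Polynomial.coeff_C_mul, Polynomial.coeff_X_pow, this]
          · simp
        rw [h] at hco
        simpa using hco.symm
      have hPint : IntegrableOn (fun t : ℝ => (P.eval t) ^ 2) (Set.Ioo (0:ℝ) 1) :=
        ((P.continuous_aeval.pow 2).integrableOn_Icc).mono_set Set.Ioo_subset_Icc_self
      rw [setIntegral_pos_iff_support_of_nonneg_ae
        (ae_of_all _ fun t => sq_nonneg (P.eval t)) hPint]
      have hroots : Set.Finite {t : ℝ | P.IsRoot t} := Polynomial.finite_setOf_isRoot hP0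
      have hsub : Set.Ioo (0:ℝ) 1 \ {t : ℝ | P.IsRoot t}
          ⊆ Function.support (fun t : ℝ => (P.eval t) ^ 2) ∩ Set.Ioo 0 1 := by
        intro t htd
        refine ⟨?_, htd.1⟩
        simp only [Function.mem_support]
        intro hz
        exact htd.2 (by simpa [Polynomial.IsRoot] using pow_eq_zero_iff (n := 2) (by norm_num) |>.mp hz)
      calc (0 : ENNReal) < volume (Set.Ioo (0:ℝ) 1 \ {t : ℝ | P.IsRoot t}) := by
            rw [measure_diff_null (hroots.measure_zero _)]
            simp
        _ ≤ _ := measure_mono hsub
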